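/- Let κ be a nonzero complex number, set h = 3/(4κ), and let U = {z ∈ ℂ : 0 < |z| < 1} \ (−1, 0]. Suppose φ : ℂ → ℂ is complex differentiable on U with derivative complex differentiable on U, and satisfies κ²·z·(1−z)·φ″(z) − κ·((κ+2)·z − 1)·φ′(z) + (κ/(2z) − 3/(4·z·(1−z)))·φ(z) = 0 for all z ∈ U. Define f(z) = z^{2h−1}·(1−z)^{2h}·φ(z), where complex powers are taken with the principal branch. Then f is twice complex differentiable on U and satisfies the hypergeometric-type equation κ²·z·(1−z)·f″(z) + κ·(κ·(2−3z) − 2·(1−2z))·f′(z) − (κ−1)·(κ−3)·f(z) = 0 for all z ∈ U. -/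

import Mathlib

open Complex

/-- The slit punctured unit disk `{z ∈ ℂ : 0 < |z| < 1} \ (−1, 0]`. -/
def slitDisk : Set ℂ :=
  {z : ℂ | 0 < ‖z‖ ∧ ‖z‖ < 1} \
    {z : ℂ | z.im = 0 ∧ z.re ∈ Set.Ioc (-1 : ℝ) 0}

lemma slitDisk_eq : slitDisk = Metric.ball (0 : ℂ) 1 ∩ Complex.slitPlane := by
  ext z
  simp only [slitDisk, Set.mem_diff, Set.mem_setOf_eq, Set.mem_inter_iff, Metric.mem_ball,
    dist_zero_right, Complex.mem_slitPlane_iff, Set.mem_Ioc]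
  constructor
  · rintro ⟨⟨h0, h1⟩, h2⟩
    refine ⟨h1, ?_⟩
    by_contra hc
    push_neg at hc
    obtain ⟨hre, him⟩ := hc
    have him0 : z.im = 0 := him
    apply h2
    refine ⟨him0, ?_, hre⟩
    have := Complex.abs_re_le_norm z
    have hne : z ≠ 0 := by
      intro h; rw [h] at h0; simp at h0
    have : |z.re| < 1 := lt_of_le_of_lt (Complex.abs_re_le_norm z) h1
    have habs := abs_lt.mp this
    rcases lt_or_eq_of_le hre with h | h
    · linarith [habs.1]
    · exfalso; apply hne
      apply Complex.ext <;> simp [h.symm, him0]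
  · rintro ⟨h1, h2⟩
    have hne : z ≠ 0 := Complex.slitPlane_ne_zero h2
    refine ⟨⟨by simpa using hne, h1⟩, ?_⟩
    rintro ⟨him, hre1, hre0⟩
    rcases h2 with h | h
    · linarith
    · exact h him

lemma isOpen_slitDisk : IsOpen slitDisk := by
  rw [slitDisk_eq]; exact Metric.isOpen_ball.inter Complex.isOpen_slitPlane

lemma mem_slitPlane_of_slitDisk {z : ℂ} (hz : z ∈ slitDisk) : z ∈ Complex.slitPlane := by
  rw [slitDisk_eq] at hz; exact hz.2

lemma one_sub_mem_slitPlane_of_slitDisk {z : ℂ} (hz : z ∈ slitDisk) :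
    (1 - z) ∈ Complex.slitPlane := by
  rw [slitDisk_eq] at hz
  have h1 : ‖z‖ < 1 := by
    have := hz.1; simpa using this
  have : |z.re| < 1 := lt_of_le_of_lt (Complex.abs_re_le_norm z) h1
  rw [Complex.mem_slitPlane_iff]
  left
  simp only [Complex.sub_re, Complex.one_re]
  linarith [(abs_lt.mp this).2]

set_option maxHeartbeats 2000000 in
/-- **Section 3.1, equation (3.9) → (3.11).** If `φ` satisfies the second-order ODE
`κ²z(1−z)φ″ − κ((κ+2)z−1)φ′ + (κ/(2z) − 3/(4z(1−z)))φ = 0` on the slit disk, then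
`f(z) = z^{2h−1}(1−z)^{2h}φ(z)` with `h = 3/(4κ)` (principal branch powers) is twice
holomorphic on the slit disk and satisfies the hypergeometric-type equation
`κ²z(1−z)f″ + κ(κ(2−3z) − 2(1−2z))f′ − (κ−1)(κ−3)f = 0`. -/
theorem hypergeometric_substitution_one (κ : ℂ) (hκ : κ ≠ 0) (φ : ℂ → ℂ)
    (hd : ∀ z ∈ slitDisk, DifferentiableAt ℂ φ z)
    (hd' : ∀ z ∈ slitDisk, DifferentiableAt ℂ (deriv φ) z)
    (ode : ∀ z ∈ slitDisk, κ ^ 2 * z * (1 - z) * deriv (deriv φ) z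
        - κ * ((κ + 2) * z - 1) * deriv φ z
        + (κ / (2 * z) - 3 / (4 * z * (1 - z))) * φ z = 0)
    (f : ℂ → ℂ)
    (hf : f = fun z => z ^ (2 * (3 / (4 * κ)) - 1) * (1 - z) ^ (2 * (3 / (4 * κ))) * φ z) :
    (∀ z ∈ slitDisk, DifferentiableAt ℂ f z) ∧
    (∀ z ∈ slitDisk, DifferentiableAt ℂ (deriv f) z) ∧
    (∀ z ∈ slitDisk, κ ^ 2 * z * (1 - z) * deriv (deriv f) z
        + κ * (κ * (2 - 3 * z) - 2 * (1 - 2 * z)) * deriv f z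
        - (κ - 1) * (κ - 3) * f z = 0) := by
  set a : ℂ := 2 * (3 / (4 * κ)) - 1 with ha
  set b : ℂ := 2 * (3 / (4 * κ)) with hb
  -- basic facts at each point
  have key : ∀ z ∈ slitDisk,
      HasDerivAt f
        (z ^ a * (1 - z) ^ b * (deriv φ z + (a / z - b / (1 - z)) * φ z)) z := by
    intro z hz
    have hzp : z ∈ Complex.slitPlane := mem_slitPlane_of_slitDisk hz
    have h1zp : (1 - z) ∈ Complex.slitPlane := one_sub_mem_slitPlane_of_slitDisk hz
    have hzne : z ≠ 0 := Complex.slitPlane_ne_zero hzp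
    have h1zne : (1 : ℂ) - z ≠ 0 := Complex.slitPlane_ne_zero h1zp
    have hA : HasDerivAt (fun w : ℂ => w ^ a) (a * z ^ (a - 1) * 1) z :=
      (hasDerivAt_id z).cpow_const hzp
    have hB : HasDerivAt (fun w : ℂ => (1 - w) ^ b) (b * (1 - z) ^ (b - 1) * (0 - 1)) z :=
      ((hasDerivAt_const z (1 : ℂ)).sub (hasDerivAt_id z)).cpow_const h1zp
    have hprod := (hA.mul hB).mul (hd z hz).hasDerivAt
    rw [hf]
    refine hprod.congr_deriv ?_
    simp only [Complex.cpow_sub _ _ hzne, Complex.cpow_sub _ _ h1zne, Complex.cpow_one, Pi.mul_apply]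
    ring
  have key2 : ∀ z ∈ slitDisk,
      HasDerivAt (fun w => w ^ a * (1 - w) ^ b * (deriv φ w + (a / w - b / (1 - w)) * φ w))
        (z ^ a * (1 - z) ^ b *
          (deriv (deriv φ) z + 2 * (a / z - b / (1 - z)) * deriv φ z +
            ((a / z - b / (1 - z)) ^ 2 - a / z ^ 2 - b / (1 - z) ^ 2) * φ z)) z := by
    intro z hz
    have hzp : z ∈ Complex.slitPlane := mem_slitPlane_of_slitDisk hz
    have h1zp : (1 - z) ∈ Complex.slitPlane := one_sub_mem_slitPlane_of_slitDisk hz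
    have hzne : z ≠ 0 := Complex.slitPlane_ne_zero hzp
    have h1zne : (1 : ℂ) - z ≠ 0 := Complex.slitPlane_ne_zero h1zp
    have hA : HasDerivAt (fun w : ℂ => w ^ a) (a * z ^ (a - 1) * 1) z :=
      (hasDerivAt_id z).cpow_const hzp
    have hB : HasDerivAt (fun w : ℂ => (1 - w) ^ b) (b * (1 - z) ^ (b - 1) * (0 - 1)) z :=
      ((hasDerivAt_const z (1 : ℂ)).sub (hasDerivAt_id z)).cpow_const h1zp
    have hq1 : HasDerivAt (fun w : ℂ => a / w) ((0 * z - a * 1) / z ^ 2) z :=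
      (hasDerivAt_const z a).div (hasDerivAt_id z) hzne
    have hq2 : HasDerivAt (fun w : ℂ => b / (1 - w)) ((0 * (1 - z) - b * (0 - 1)) / (1 - z) ^ 2) z :=
      (hasDerivAt_const z b).div ((hasDerivAt_const z (1 : ℂ)).sub (hasDerivAt_id z)) h1zne
    have hG : HasDerivAt (fun w => deriv φ w + (a / w - b / (1 - w)) * φ w)
        (deriv (deriv φ) z +
          (((0 * z - a * 1) / z ^ 2 - (0 * (1 - z) - b * (0 - 1)) / (1 - z) ^ 2) * φ z +
            (a / z - b / (1 - z)) * deriv φ z)) z :=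
      (hd' z hz).hasDerivAt.add ((hq1.sub hq2).mul (hd z hz).hasDerivAt)
    have hprod := (hA.mul hB).mul hG
    refine hprod.congr_deriv ?_
    simp only [Complex.cpow_sub _ _ hzne, Complex.cpow_sub _ _ h1zne, Complex.cpow_one, Pi.mul_apply]
    ring
  have hderiv1 : ∀ z ∈ slitDisk,
      deriv f z = z ^ a * (1 - z) ^ b * (deriv φ z + (a / z - b / (1 - z)) * φ z) :=
    fun z hz => (key z hz).deriv
  have hderiv2 : ∀ z ∈ slitDisk,
      deriv (deriv f) z = z ^ a * (1 - z) ^ b *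
        (deriv (deriv φ) z + 2 * (a / z - b / (1 - z)) * deriv φ z +
          ((a / z - b / (1 - z)) ^ 2 - a / z ^ 2 - b / (1 - z) ^ 2) * φ z) := by
    intro z hz
    have hev : deriv f =ᶠ[nhds z]
        fun w => w ^ a * (1 - w) ^ b * (deriv φ w + (a / w - b / (1 - w)) * φ w) := by
      filter_upwards [isOpen_slitDisk.mem_nhds hz] with w hw using hderiv1 w hw
    rw [hev.deriv_eq]
    exact (key2 z hz).deriv
  refine ⟨fun z hz => (key z hz).differentiableAt, ?_, ?_⟩
  · intro z hz
    have hev : deriv f =ᶠ[nhds z]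
        fun w => w ^ a * (1 - w) ^ b * (deriv φ w + (a / w - b / (1 - w)) * φ w) := by
      filter_upwards [isOpen_slitDisk.mem_nhds hz] with w hw using hderiv1 w hw
    exact (key2 z hz).differentiableAt.congr_of_eventuallyEq hev
  · intro z hz
    have hzp : z ∈ Complex.slitPlane := mem_slitPlane_of_slitDisk hz
    have h1zp : (1 - z) ∈ Complex.slitPlane := one_sub_mem_slitPlane_of_slitDisk hz
    have hzne : z ≠ 0 := Complex.slitPlane_ne_zero hzp
    have h1zne : (1 : ℂ) - z ≠ 0 := Complex.slitPlane_ne_zero h1zp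
    rw [hderiv2 z hz, hderiv1 z hz, hf]
    simp only
    have hfac : κ ^ 2 * z * (1 - z) *
          (z ^ a * (1 - z) ^ b *
            (deriv (deriv φ) z + 2 * (a / z - b / (1 - z)) * deriv φ z +
              ((a / z - b / (1 - z)) ^ 2 - a / z ^ 2 - b / (1 - z) ^ 2) * φ z)) +
        κ * (κ * (2 - 3 * z) - 2 * (1 - 2 * z)) *
          (z ^ a * (1 - z) ^ b * (deriv φ z + (a / z - b / (1 - z)) * φ z)) -
        (κ - 1) * (κ - 3) * (z ^ a * (1 - z) ^ b * φ z) =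
        z ^ a * (1 - z) ^ b *
          (κ ^ 2 * z * (1 - z) *
            (deriv (deriv φ) z + 2 * (a / z - b / (1 - z)) * deriv φ z +
              ((a / z - b / (1 - z)) ^ 2 - a / z ^ 2 - b / (1 - z) ^ 2) * φ z) +
          κ * (κ * (2 - 3 * z) - 2 * (1 - 2 * z)) *
            (deriv φ z + (a / z - b / (1 - z)) * φ z) -
          (κ - 1) * (κ - 3) * φ z) := by ring
    rw [hfac]
    apply mul_eq_zero_of_right
    have hode := ode z hz
    have hiz : z * z⁻¹ = 1 := mul_inv_cancel₀ hzne
    have hiu : (1 - z) * (1 - z)⁻¹ = 1 := mul_inv_cancel₀ h1zne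
    have hik : κ * κ⁻¹ = 1 := mul_inv_cancel₀ hκ
    have hpart : z⁻¹ * (1 - z)⁻¹ = z⁻¹ + (1 - z)⁻¹ := by
      field_simp
      ring
    have hsq : ((1 - z) ^ 2)⁻¹ = (1 - z)⁻¹ ^ 2 := by rw [← inv_pow]
    have hq : (4 * z * (1 - z))⁻¹ = 4⁻¹ * z⁻¹ * (1 - z)⁻¹ := by
      rw [mul_inv, mul_inv]
    rw [ha, hb]
    linear_combination hode + ((-4) * κ * (φ z) + 6 * κ * κ⁻¹ * (φ z) + (-2) * κ ^ 2 * (deriv φ z) + 1 * κ ^ 2 * (φ z) + 3 * κ ^ 2 * κ⁻¹ * (deriv φ z) + (-9/4) * κ ^ 2 * κ⁻¹ ^ 2 * (φ z) + 3 * κ ^ 2 * (1 - z)⁻¹ * κ⁻¹ * (φ z) + (-9/2) * κ ^ 2 * (1 - z)⁻¹ * κ⁻¹ ^ 2 * (φ z) + 2 * κ ^ 2 * z⁻¹ * (φ z) + (-9/2) * κ ^ 2 * z⁻¹ * κ⁻¹ * (φ z) + (9/4) * κ ^ 2 * z⁻¹ * κ⁻¹ ^ 2 * (φ z) + 2 *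 z * κ ^ 2 * (deriv φ z) + (-3) * z * κ ^ 2 * κ⁻¹ * (deriv φ z) + (-3) * z * κ ^ 2 * (1 - z)⁻¹ * κ⁻¹ * (φ z) + (9/2) * z * κ ^ 2 * (1 - z)⁻¹ * κ⁻¹ ^ 2 * (φ z) + (-2) * z * κ ^ 2 * z⁻¹ * (φ z) + (9/2) * z * κ ^ 2 * z⁻¹ * κ⁻¹ * (φ z) + (-9/4) * z * κ ^ 2 * z⁻¹ * κ⁻¹ ^ 2 * (φ z)) * hiz + ((-3/4) * (φ z) + (9/4) * z * (1 - z)⁻¹ * (φ z) + (-3) * z * κ * (deriv φ z) + (-3/2) * z * κ * (1 - z)⁻¹ * (φ z)) * hiu + ((15/4) * (φ z) + (-3/2) * (1 - z)⁻¹ * (φ z) + (-3/4) * z⁻¹ * (φ z) + 3 * κ * (deriv φ z) + (-9/4) * κ * κ⁻¹ * (φ z) + (-9/2) * κ * (1 - z)⁻¹ * κ⁻¹ * (φ z) + (-3/2) * κ * z⁻¹ * (φ z) + (9/4) * κ * z⁻¹ * κ⁻¹ * (φ z) + (-3/2) * z * (1 - z)⁻¹ * (φ z) + (9/4) * z * (1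 - z)⁻¹ ^ 2 * (φ z) + (-3) * z * κ * (deriv φ z) + (-3) * z * κ * (1 - z)⁻¹ * (deriv φ z) + (3/2) * z * κ * (1 - z)⁻¹ * (φ z) + (9/2) * z * κ * (1 - z)⁻¹ * κ⁻¹ * (φ z) + (-3/2) * z * κ * (1 - z)⁻¹ ^ 2 * (φ z) + (9/4) * z * κ * (1 - z)⁻¹ ^ 2 * κ⁻¹ * (φ z) + (-9/4) * z ^ 2 * (1 - z)⁻¹ ^ 2 * (φ z) + 3 * z ^ 2 * κ * (1 - z)⁻¹ * (deriv φ z) + (3/2) * z ^ 2 * κ * (1 - z)⁻¹ ^ 2 * (φ z) + (-9/4) * z ^ 2 * κ * (1 - z)⁻¹ ^ 2 * κ⁻¹ * (φ z)) * hik + ((3/4) * (φ z)) * hpart + ((3/2)*κ^2*κ⁻¹*(φ z)*(z^2 - z)) * hsq + (3*(φ z)) * hq
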